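/- Suppose each of n agents i has a submodular valuation v_i on subsets of a finite set O of items with v_i(∅) = 0 and subjective binary marginal gains determined by a constant λ_i > 0. Then every clean maximum Nash welfare (MNW) allocation is envy-free up to one good (EF1). -/

import Mathlib

section helpers
variable {O : Type*} [DecidableEq O]
variable (w : Finset O → ℝ) (lam : ℝ)

lemma marg_nonneg (hlam : 0 < lam)
    (hbin : ∀ (S : Finset O) (o : O), o ∉ S →
      w (insert o S) - w S = 0 ∨ w (insert o S) - w S = lam) :
    ∀ (S : Finset O) (o : O), w S ≤ w (insert o S) := by
  intro S o
  by_cases h : o ∈ S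
  · simp [Finset.insert_eq_self.mpr h]
  · rcases hbin S o h with h' | h' <;> linarith

lemma w_union (hlam : 0 < lam)
    (hbin : ∀ (S : Finset O) (o : O), o ∉ S →
      w (insert o S) - w S = 0 ∨ w (insert o S) - w S = lam) :
    ∀ (U S : Finset O), w S ≤ w (S ∪ U) := by
  intro U
  induction U using Finset.induction with
  | empty => simp
  | insert _ _ ha ih =>
    intro S
    rename_i a U
    rw [Finset.union_insert a S U]
    exact le_trans (ih S) (marg_nonneg w lam hlam hbin (S ∪ U) a)

lemma w_mono (hlam : 0 < lam)
    (hbin : ∀ (S : Finset O) (o : O), o ∉ S →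
      w (insert o S) - w S = 0 ∨ w (insert o S) - w S = lam)
    {S T : Finset O} (h : S ⊆ T) : w S ≤ w T := by
  have := w_union w lam hlam hbin T S
  rwa [Finset.union_eq_right.mpr h] at this

lemma w_upper (h0 : w ∅ = 0)
    (hbin : ∀ (S : Finset O) (o : O), o ∉ S →
      w (insert o S) - w S = 0 ∨ w (insert o S) - w S = lam) (hlam : 0 < lam) :
    ∀ S : Finset O, w S ≤ lam * S.card := by
  intro S
  induction S using Finset.induction with
  | empty => simp [h0]
  | insert _ _ ha ih =>
    rename_i a S
    rcases hbin S a ha with h' | h' <;>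
    · rw [Finset.card_insert_of_notMem ha]
      push_cast
      nlinarith

lemma clean_marg (hlam : 0 < lam)
    (hbin : ∀ (S : Finset O) (o : O), o ∉ S →
      w (insert o S) - w S = 0 ∨ w (insert o S) - w S = lam)
    (hsub : ∀ (S T : Finset O), S ⊆ T → ∀ o ∉ T,
      w (insert o T) - w T ≤ w (insert o S) - w S)
    (A : Finset O) (hA : ∀ o ∈ A, 0 < w A - w (A \ {o})) :
    ∀ S ⊆ A, ∀ o ∈ S, w S - w (S \ {o}) = lam := by
  intro S hS o ho
  have hoA : o ∈ A := hS ho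
  have hiA : insert o (A \ {o}) = A := by
    rw [← Finset.erase_eq, Finset.insert_erase hoA]
  have hiS : insert o (S \ {o}) = S := by
    rw [← Finset.erase_eq, Finset.insert_erase ho]
  have hmA : w A - w (A \ {o}) = lam := by
    rcases hbin (A \ {o}) o (by simp) with h' | h' <;> rw [hiA] at h'
    · exact absurd h' (by have := hA o hoA; linarith)
    · exact h'
  have hle : w A - w (A \ {o}) ≤ w S - w (S \ {o}) := by
    have := hsub (S \ {o}) (A \ {o})
      (Finset.sdiff_subset_sdiff hS (le_refl _)) o (by simp)
    rwa [hiA, hiS] at this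
  rcases hbin (S \ {o}) o (by simp) with h' | h' <;> rw [hiS] at h'
  · linarith
  · exact h'

lemma clean_val (hlam : 0 < lam) (h0 : w ∅ = 0)
    (hbin : ∀ (S : Finset O) (o : O), o ∉ S →
      w (insert o S) - w S = 0 ∨ w (insert o S) - w S = lam)
    (hsub : ∀ (S T : Finset O), S ⊆ T → ∀ o ∉ T,
      w (insert o T) - w T ≤ w (insert o S) - w S)
    (A : Finset O) (hA : ∀ o ∈ A, 0 < w A - w (A \ {o})) :
    ∀ S, S ⊆ A → w S = lam * S.card := by
  intro S
  induction S using Finset.strongInduction with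
  | _ S ih =>
    intro hS
    rcases S.eq_empty_or_nonempty with rfl | ⟨o, ho⟩
    · simp [h0]
    · have hm := clean_marg w lam hlam hbin hsub A hA S hS o ho
      have hsub' : S \ {o} ⊂ S := by
        rw [← Finset.erase_eq]
        exact Finset.erase_ssubset ho
      have hv := ih (S \ {o}) hsub' (le_trans (Finset.sdiff_subset) hS)
      have hcard : (S \ {o}).card = S.card - 1 := by
        rw [← Finset.erase_eq, Finset.card_erase_of_mem ho]
      have hpos : 1 ≤ S.card := Finset.card_pos.mpr ⟨o, ho⟩
      rw [hcard] at hv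
      have hc : ((S.card - 1 : ℕ) : ℝ) = (S.card : ℝ) - 1 := by
        push_cast [hpos]; ring
      rw [hc] at hv
      nlinarith

lemma exchange (hlam : 0 < lam)
    (hbin : ∀ (S : Finset O) (o : O), o ∉ S →
      w (insert o S) - w S = 0 ∨ w (insert o S) - w S = lam)
    (hsub : ∀ (S T : Finset O), S ⊆ T → ∀ o ∉ T,
      w (insert o T) - w T ≤ w (insert o S) - w S)
    {S T : Finset O} (h : w S < w T) :
    ∃ o ∈ T, o ∉ S ∧ w (insert o S) - w S = lam := by
  by_contra hc
  push_neg at hc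
  have hzero : ∀ o ∈ T, o ∉ S → w (insert o S) = w S := by
    intro o hoT hoS
    rcases hbin S o hoS with h' | h'
    · linarith
    · exact absurd h' (hc o hoT hoS)
  have key : ∀ U : Finset O, (∀ o ∈ U, o ∉ S → w (insert o S) = w S) →
      w (S ∪ U) = w S := by
    intro U
    induction U using Finset.induction with
    | empty => simp
    | insert _ _ ha ih =>
      rename_i a U
      intro hU
      rw [Finset.union_insert a S U]
      by_cases haSU : a ∈ S ∪ U
      · rw [Finset.insert_eq_self.mpr haSU]
        exact ih (fun o ho => hU o (Finset.mem_insert_of_mem ho))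
      · have haS : a ∉ S := fun h => haSU (Finset.mem_union_left _ h)
        have h1 : w (insert a (S ∪ U)) - w (S ∪ U) ≤ w (insert a S) - w S :=
          hsub S (S ∪ U) Finset.subset_union_left a haSU
        have h2 : w (insert a S) = w S := hU a (Finset.mem_insert_self a U) haS
        have h3 : 0 ≤ w (insert a (S ∪ U)) - w (S ∪ U) := by
          rcases hbin (S ∪ U) a haSU with h' | h' <;> linarith
        have h4 : w (insert a (S ∪ U)) = w (S ∪ U) := by linarith
        rw [h4]
        exact ih (fun o ho => hU o (Finset.mem_insert_of_mem ho))
  have hkey := key T hzero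
  have hTle : w T ≤ w (S ∪ T) :=
    w_mono w lam hlam hbin Finset.subset_union_right
  linarith
end helpers

/-- An allocation: bundles are pairwise disjoint. -/
def IsAlloc {O : Type*} [DecidableEq O] {n : ℕ} (A : Fin n → Finset O) : Prop :=
  ∀ i j, i ≠ j → Disjoint (A i) (A j)

/-- A clean allocation: every item in every bundle has positive marginal gain. -/
def IsClean {O : Type*} [DecidableEq O] {n : ℕ} (v : Fin n → Finset O → ℝ)
    (A : Fin n → Finset O) : Prop :=
  ∀ i, ∀ o ∈ A i, 0 < v i (A i) - v i (A i \ {o})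

/-- Envy-freeness up to one good. -/
def EF1 {O : Type*} [DecidableEq O] {n : ℕ} (v : Fin n → Finset O → ℝ)
    (A : Fin n → Finset O) : Prop :=
  ∀ i j, v i (A j) ≤ v i (A i) ∨ ∃ o ∈ A j, v i (A j \ {o}) ≤ v i (A i)

/-- The set of agents with positive realized value. -/
noncomputable def posAgents {O : Type*} {n : ℕ} (v : Fin n → Finset O → ℝ)
    (A : Fin n → Finset O) : Finset (Fin n) :=
  Finset.univ.filter fun i => 0 < v i (A i)

/-- Maximum Nash welfare allocation. -/
def IsMNW {O : Type*} [DecidableEq O] {n : ℕ} (v : Fin n → Finset O → ℝ)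
    (A : Fin n → Finset O) : Prop :=
  IsAlloc A ∧
  (∀ B : Fin n → Finset O, IsAlloc B → (posAgents v B).card ≤ (posAgents v A).card) ∧
  (∀ B : Fin n → Finset O, IsAlloc B → (posAgents v B).card = (posAgents v A).card →
    ∏ i ∈ posAgents v B, v i (B i) ≤ ∏ i ∈ posAgents v A, v i (A i))

/-- For submodular valuations with subjective binary marginal
gains, every clean MNW allocation is EF1. -/
theorem subjective_binary_clean_MNW_EF1
    {O : Type*} [DecidableEq O] [Fintype O] {n : ℕ}
    (v : Fin n → Finset O → ℝ) (lam : Fin n → ℝ)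
    (hlam : ∀ i, 0 < lam i)
    (h0 : ∀ i, v i ∅ = 0)
    (hbin : ∀ i (S : Finset O) (o : O), o ∉ S →
      v i (insert o S) - v i S = 0 ∨ v i (insert o S) - v i S = lam i)
    (hsub : ∀ i (S T : Finset O), S ⊆ T → ∀ o ∉ T,
      v i (insert o T) - v i T ≤ v i (insert o S) - v i S)
    (A : Fin n → Finset O)
    (hclean : IsClean v A)
    (hmnw : IsMNW v A) :
    EF1 v A := by
  classical
  intro i j
  by_cases hij : i = j
  · subst hij; exact Or.inl le_rfl
  by_contra hcon
  push_neg at hcon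
  obtain ⟨henvy, hall⟩ := hcon
  -- basic facts
  have hnn : ∀ k (S : Finset O), 0 ≤ v k S := by
    intro k S
    have := w_mono (v k) (lam k) (hlam k) (hbin k) (Finset.empty_subset S)
    rwa [h0 k] at this
  have hdisj : Disjoint (A i) (A j) := hmnw.1 i j hij
  -- A j has at least 2 elements
  have hAjpos : 0 < v i (A j) := lt_of_le_of_lt (hnn i (A i)) henvy
  have hAjne : (A j).Nonempty := by
    rcases (A j).eq_empty_or_nonempty with h | h
    · rw [h, h0 i] at hAjpos; exact absurd hAjpos (lt_irrefl 0)
    · exact h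
  obtain ⟨o0, ho0⟩ := hAjne
  have h2 : 2 ≤ (A j).card := by
    have hp : 0 < v i (A j \ {o0}) := lt_of_le_of_lt (hnn i (A i)) (hall o0 ho0)
    have hne : (A j \ {o0}).Nonempty := by
      rcases (A j \ {o0}).eq_empty_or_nonempty with h | h
      · rw [h, h0 i] at hp; exact absurd hp (lt_irrefl 0)
      · exact h
    obtain ⟨o1, ho1⟩ := hne
    rw [Finset.mem_sdiff, Finset.mem_singleton] at ho1
    exact Finset.one_lt_card.mpr ⟨o0, ho0, o1, ho1.1, fun h => ho1.2 h.symm⟩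
  -- exchange item
  obtain ⟨o, hoAj, hoAi, hmarg⟩ :=
    exchange (v i) (lam i) (hlam i) (hbin i) (hsub i) henvy
  have ho_not : ∀ k, k ≠ j → o ∉ A k := by
    intro k hk hmem
    exact Finset.disjoint_left.mp (hmnw.1 j k (fun h => hk h.symm)) hoAj hmem
  -- new allocation
  set B : Fin n → Finset O :=
    fun k => if k = i then insert o (A i) else if k = j then A j \ {o} else A k with hB
  have hBi : B i = insert o (A i) := by simp [hB]
  have hji : j ≠ i := fun h => hij h.symm
  have hBj : B j = A j \ {o} := by simp [hB, hji]
  have hBk : ∀ k, k ≠ i → k ≠ j → B k = A k := by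
    intro k h1 h2; simp [hB, h1, h2]
  have hBalloc : IsAlloc B := by
    have hBsub : ∀ k, k ≠ i → B k ⊆ A k := by
      intro k hk
      by_cases hkj : k = j
      · subst hkj; rw [hBj]; exact Finset.sdiff_subset
      · rw [hBk k hk hkj]
    have haux : ∀ l, l ≠ i → Disjoint (B i) (B l) := by
      intro l hl
      rw [hBi, Finset.disjoint_insert_left]
      constructor
      · by_cases hlj : l = j
        · subst hlj; rw [hBj]; simp
        · rw [hBk l hl hlj]; exact ho_not l hlj
      · exact (hmnw.1 i l (fun h => hl h.symm)).mono_right (hBsub l hl)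
    intro k l hkl
    by_cases hk : k = i
    · subst hk; exact haux l (Ne.symm hkl)
    by_cases hl : l = i
    · subst hl; exact (haux k hk).symm
    · exact ((hmnw.1 k l hkl).mono_left (hBsub k hk)).mono_right (hBsub l hl)
  -- values
  have hvBi : v i (B i) = v i (A i) + lam i := by rw [hBi]; linarith
  have hvBj : v j (B j) = v j (A j) - lam j := by
    rw [hBj]
    have := clean_marg (v j) (lam j) (hlam j) (hbin j) (hsub j) (A j)
      (hclean j) (A j) (le_refl _) o hoAj
    linarith
  have hvj : v j (A j) = lam j * (A j).card :=
    clean_val (v j) (lam j) (hlam j) (h0 j) (hbin j) (hsub j) (A j)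
      (hclean j) (A j) (le_refl _)
  have hvBjpos : 0 < v j (B j) := by
    rw [hvBj, hvj]
    have : (2 : ℝ) ≤ ((A j).card : ℝ) := by exact_mod_cast h2
    nlinarith [hlam j]
  have hvAjpos : 0 < v j (A j) := by
    have : (2 : ℝ) ≤ ((A j).card : ℝ) := by exact_mod_cast h2
    rw [hvj]; nlinarith [hlam j]
  have hvBipos : 0 < v i (B i) := by
    rw [hvBi]; have := hnn i (A i); have := hlam i; linarith
  by_cases hvi : 0 < v i (A i)
  · -- posAgents equal, product increases
    have hPeq : posAgents v B = posAgents v A := by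
      ext k
      simp only [posAgents, Finset.mem_filter, Finset.mem_univ, true_and]
      by_cases hk : k = i
      · subst hk; simp [hvBipos, hvi]
      by_cases hkj : k = j
      · subst hkj; simp [hvBjpos, hvAjpos]
      · rw [hBk k hk hkj]
    have hprod := hmnw.2.2 B hBalloc (by rw [hPeq])
    rw [hPeq] at hprod
    -- now derive contradiction
    set P := posAgents v A with hP
    have hiP : i ∈ P := by simp [hP, posAgents, hvi]
    have hjP : j ∈ P := by simp [hP, posAgents, hvAjpos]
    have hjP' : j ∈ P.erase i := Finset.mem_erase.mpr ⟨Ne.symm hij, hjP⟩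
    have hsplitA : ∏ k ∈ P, v k (A k) =
        v i (A i) * (v j (A j) * ∏ k ∈ (P.erase i).erase j, v k (A k)) := by
      rw [← Finset.mul_prod_erase P _ hiP, ← Finset.mul_prod_erase (P.erase i) _ hjP']
    have hsplitB : ∏ k ∈ P, v k (B k) =
        v i (B i) * (v j (B j) * ∏ k ∈ (P.erase i).erase j, v k (B k)) := by
      rw [← Finset.mul_prod_erase P _ hiP, ← Finset.mul_prod_erase (P.erase i) _ hjP']
    have hrest : ∏ k ∈ (P.erase i).erase j, v k (B k) =
        ∏ k ∈ (P.erase i).erase j, v k (A k) := by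
      apply Finset.prod_congr rfl
      intro k hk
      rw [Finset.mem_erase, Finset.mem_erase] at hk
      rw [hBk k hk.2.1 hk.1]
    have hrestpos : 0 < ∏ k ∈ (P.erase i).erase j, v k (A k) := by
      apply Finset.prod_pos
      intro k hk
      have : k ∈ P := Finset.mem_of_mem_erase (Finset.mem_of_mem_erase hk)
      simpa [hP, posAgents] using this
    -- key strict inequality
    have hkey : v i (A i) * v j (A j) < v i (B i) * v j (B j) := by
      have hub : v i (A j \ {o}) ≤ lam i * ((A j \ {o}).card : ℝ) :=
        w_upper (v i) (lam i) (h0 i) (hbin i) (hlam i) (A j \ {o})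
      have hcard : ((A j \ {o}).card : ℕ) = (A j).card - 1 := by
        rw [← Finset.erase_eq, Finset.card_erase_of_mem hoAj]
      have h1le : 1 ≤ (A j).card := by omega
      have hcardR : ((A j \ {o}).card : ℝ) = ((A j).card : ℝ) - 1 := by
        rw [hcard, Nat.cast_sub h1le]; norm_num
      have hlt : v i (A i) < lam i * (((A j).card : ℝ) - 1) := by
        rw [← hcardR]
        exact lt_of_lt_of_le (hall o hoAj) hub
      rw [hvBi, hvBj, hvj]
      have h2R : (2 : ℝ) ≤ ((A j).card : ℝ) := by exact_mod_cast h2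
      nlinarith [hlam i, hlam j, hnn i (A i)]
    have : ∏ k ∈ P, v k (A k) < ∏ k ∈ P, v k (B k) := by
      rw [hsplitA, hsplitB, hrest]
      nlinarith [mul_lt_mul_of_pos_right hkey hrestpos]
    linarith
  · -- i joins posAgents: card increases
    have hvi0 : v i (A i) = 0 := le_antisymm (not_lt.mp hvi) (hnn i (A i))
    have hiPB : i ∈ posAgents v B := by simp [posAgents, hvBipos]
    have hsub' : insert i (posAgents v A) ⊆ posAgents v B := by
      intro k hk
      simp only [posAgents, Finset.mem_filter, Finset.mem_univ, true_and]
      rcases Finset.mem_insert.mp hk with h | h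
      · subst h; exact hvBipos
      · have hk' : 0 < v k (A k) := by simpa [posAgents] using h
        by_cases hki : k = i
        · subst hki; exact absurd hk' hvi
        by_cases hkj : k = j
        · subst hkj; exact hvBjpos
        · rwa [hBk k hki hkj]
    have hiP : i ∉ posAgents v A := by simp [posAgents, hvi0]
    have hcard : (posAgents v A).card + 1 ≤ (posAgents v B).card := by
      calc (posAgents v A).card + 1 = (insert i (posAgents v A)).card :=
            (Finset.card_insert_of_notMem hiP).symm
        _ ≤ (posAgents v B).card := Finset.card_le_card hsub'
    have := hmnw.2.1 B hBalloc
    omega
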